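/- Let C be a normal closed cone with nonempty interior in a real Banach space. Let f : int C → int C be order-preserving and homogeneous, and suppose f has an eigenvector in int C. Let g(x) := f(x)/‖f(x)‖ for x ∈ int C. Then for any x ∈ int C, the closure of the orbit of x under the map r_C(f)^{-1} f is compact if and only if the closure of the orbit of x under g is compact. -/

import Mathlib

open Filter Topology

private lemma aux_mul_inv (c t : ℝ) (hc : c ≠ 0) : (c * t)⁻¹ * c = t⁻¹ := by
  rw [mul_inv, mul_comm c⁻¹ t⁻¹, mul_assoc, inv_mul_cancel₀ hc, mul_one]

/-- Let C be a normal closed cone with nonempty interior in a real Banach space.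
Let f : int C → int C be order-preserving and homogeneous, and suppose f has an eigenvector in
int C. Let g(x) := f(x)/‖f(x)‖. Then for any x ∈ int C, the closure of the orbit of x under
the map r_C(f)⁻¹ f is compact iff the closure of the orbit of x under g is compact. -/
theorem orbit_compact_iff_normalized_orbit_compact
    {X : Type*} [NormedAddCommGroup X] [NormedSpace ℝ X] [CompleteSpace X]
    (C : Set X) (hC_closed : IsClosed C) (hC_convex : Convex ℝ C)
    (hC_cone : ∀ x ∈ C, ∀ t : ℝ, 0 ≤ t → t • x ∈ C)
    (hC_pointed : ∀ x, x ∈ C → -x ∈ C → x = 0)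
    (hC_int : (interior C).Nonempty)
    (hC_normal : ∃ κ > 0, ∀ x y : X, x ∈ C → y - x ∈ C → ‖x‖ ≤ κ * ‖y‖)
    (f : X → X)
    (hf_maps : ∀ x ∈ interior C, f x ∈ interior C)
    (hf_mono : ∀ x ∈ interior C, ∀ y ∈ interior C, y - x ∈ C → f y - f x ∈ C)
    (hf_hom : ∀ x ∈ interior C, ∀ t : ℝ, 0 < t → f (t • x) = t • f x)
    (hf_eig : ∃ u ∈ interior C, ∃ μ > 0, f u = μ • u)
    -- the cone spectral radius r = r_C(f), which is positive and independent of the base point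
    (r : ℝ) (hr_pos : 0 < r)
    (hr : ∀ y ∈ interior C, limsup (fun k => ‖f^[k] y‖ ^ ((k : ℝ)⁻¹)) atTop = r)
    (x : X) (hx : x ∈ interior C) :
    IsCompact (closure (Set.range fun k => (fun z => r⁻¹ • f z)^[k] x)) ↔
      IsCompact (closure (Set.range fun k => (fun z => ‖f z‖⁻¹ • f z)^[k] x)) := by
  rcases subsingleton_or_nontrivial X with hX | hX
  · constructor <;> intro _ <;> exact (Set.toFinite _).isCompact
  obtain ⟨u, hu, μ₀, hμ₀, hfu₀⟩ := hf_eig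
  set μ : ℝ := (μ₀ : ℝ) with hμdef
  have hμ : 0 < μ := by rw [hμdef]; exact_mod_cast hμ₀
  have hfu : f u = μ • u := by
    rw [hfu₀, hμdef, Nat.cast_smul_eq_nsmul]
  clear hfu₀ hμ₀
  obtain ⟨κ, hκ, hnorm⟩ := hC_normal
  -- u ≠ 0
  have hu0 : u ≠ 0 := by
    rintro rfl
    obtain ⟨ε, hε, hball⟩ := Metric.mem_nhds_iff.mp (mem_interior_iff_mem_nhds.mp hu)
    obtain ⟨z, hz⟩ := exists_ne (0 : X)
    have hzn : 0 < ‖z‖ := norm_pos_iff.mpr hz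
    set w := (ε / (2 * ‖z‖)) • z with hw
    have hwpos : (0:ℝ) < ε / (2 * ‖z‖) := by positivity
    have hwn : ‖w‖ < ε := by
      rw [hw, norm_smul, Real.norm_eq_abs, abs_of_pos hwpos]
      have h2 : ε / (2 * ‖z‖) * ‖z‖ = ε / 2 := by field_simp
      rw [h2]; linarith
    have hwC : w ∈ C := hball (by simpa [Metric.mem_ball, dist_eq_norm] using hwn)
    have hwC' : -w ∈ C := hball (by simpa [Metric.mem_ball, dist_eq_norm] using hwn)
    have : w = 0 := hC_pointed w hwC hwC'
    exact (smul_ne_zero hwpos.ne' hz) this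
  have hupos : 0 < ‖u‖ := norm_pos_iff.mpr hu0
  -- positive scalings preserve the interior
  have smul_int : ∀ t : ℝ, 0 < t → ∀ z ∈ interior C, t • z ∈ interior C := by
    intro t ht z hz
    have hmap : IsOpenMap (fun w : X => t • w) := isOpenMap_smul₀ (ne_of_gt ht)
    have hopen := hmap (interior C) isOpen_interior
    have hsub : (fun w : X => t • w) '' interior C ⊆ C := by
      rintro _ ⟨y, hy, rfl⟩; exact hC_cone y (interior_subset hy) t ht.le
    exact interior_maximal hsub hopen ⟨z, hz, rfl⟩
  -- iterates at the eigenvector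
  have hfk : ∀ k, f^[k] u = μ ^ k • u := by
    intro k; induction k with
    | zero => simp
    | succ k ih =>
      rw [Function.iterate_succ_apply', ih, hf_hom u hu _ (pow_pos hμ k), hfu, smul_smul,
        pow_succ]
  -- μ = r
  have hμr : μ = r := by
    have h1 : Tendsto (fun k : ℕ => ((k:ℝ))⁻¹) atTop (𝓝 0) :=
      tendsto_inv_atTop_nhds_zero_nat
    have h2 : Tendsto (fun k : ℕ => ‖u‖ ^ ((k:ℝ)⁻¹)) atTop (𝓝 1) := by
      have h3 : Tendsto (fun k : ℕ => Real.exp (Real.log ‖u‖ * (k:ℝ)⁻¹)) atTop (𝓝 1) := by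
        have h4 : Tendsto (fun k : ℕ => Real.log ‖u‖ * (k:ℝ)⁻¹) atTop (𝓝 0) := by
          simpa using h1.const_mul (Real.log ‖u‖)
        simpa [Function.comp_def] using (Real.continuous_exp.tendsto 0).comp h4
      exact h3.congr (fun k => (Real.rpow_def_of_pos hupos _).symm)
    have h5 : Tendsto (fun k : ℕ => μ * ‖u‖ ^ ((k:ℝ)⁻¹)) atTop (𝓝 μ) := by
      simpa using h2.const_mul μ
    have h6 : Tendsto (fun k : ℕ => ‖f^[k] u‖ ^ ((k:ℝ)⁻¹)) atTop (𝓝 μ) := by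
      refine h5.congr' ?_
      filter_upwards [eventually_ge_atTop 1] with k hk
      have hk0 : (k:ℝ) ≠ 0 := Nat.cast_ne_zero.mpr (by omega)
      rw [hfk k, norm_smul, Real.norm_eq_abs, abs_of_pos (pow_pos hμ k),
        Real.mul_rpow (pow_nonneg hμ.le k) (norm_nonneg u),
        ← Real.rpow_natCast μ k, ← Real.rpow_mul hμ.le, mul_inv_cancel₀ hk0, Real.rpow_one]
    rw [← hr u hu]
    exact h6.limsup_eq.symm
  subst hμr
  -- choose α with x - α • u ∈ C
  obtain ⟨δ, hδ, hballx⟩ := Metric.mem_nhds_iff.mp (mem_interior_iff_mem_nhds.mp hx)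
  set α := δ / (2 * ‖u‖) with hαdef
  have hαpos : 0 < α := by rw [hαdef]; positivity
  have hαx : x - α • u ∈ C := by
    apply hballx
    rw [Metric.mem_ball, dist_eq_norm]
    have : x - α • u - x = -(α • u) := by abel
    rw [this, norm_neg, norm_smul, Real.norm_eq_abs, abs_of_pos hαpos, hαdef]
    have h2 : δ / (2 * ‖u‖) * ‖u‖ = δ / 2 := by field_simp
    rw [h2]; linarith
  -- choose β with β • u - x ∈ C
  obtain ⟨ε, hε, hballu⟩ := Metric.mem_nhds_iff.mp (mem_interior_iff_mem_nhds.mp hu)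
  set β := ‖x‖ / ε + 1 with hβdef
  have hβpos : 0 < β := by rw [hβdef]; positivity
  have key1 : u - β⁻¹ • x ∈ C := by
    apply hballu
    rw [Metric.mem_ball, dist_eq_norm]
    have : u - β⁻¹ • x - u = -(β⁻¹ • x) := by abel
    rw [this, norm_neg, norm_smul, Real.norm_eq_abs, abs_of_pos (inv_pos.mpr hβpos)]
    rw [inv_mul_eq_div, div_lt_iff₀ hβpos]
    have h2 : ε * β = ‖x‖ + ε := by rw [hβdef]; field_simp
    rw [h2]; linarith
  have hβx : β • u - x ∈ C := by
    have h := hC_cone _ key1 β hβpos.le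
    rwa [smul_sub, smul_smul, mul_inv_cancel₀ hβpos.ne', one_smul] at h
  -- main induction: cone bounds on the iterates
  have key : ∀ k, f^[k] x ∈ interior C ∧ f^[k] x - (α * μ ^ k) • u ∈ C ∧
      (β * μ ^ k) • u - f^[k] x ∈ C := by
    intro k; induction k with
    | zero => simpa using ⟨hx, hαx, hβx⟩
    | succ k ih =>
      obtain ⟨h1, h2, h3⟩ := ih
      have hαk : (0:ℝ) < α * μ ^ k := mul_pos hαpos (pow_pos hμ k)
      have hβk : (0:ℝ) < β * μ ^ k := mul_pos hβpos (pow_pos hμ k)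
      have hαu : (α * μ ^ k) • u ∈ interior C := smul_int _ hαk u hu
      have hβu : (β * μ ^ k) • u ∈ interior C := smul_int _ hβk u hu
      have hfsm : ∀ t : ℝ, 0 < t → f (t • u) = (t * μ) • u := by
        intro t ht; rw [hf_hom u hu t ht, hfu, smul_smul]
      refine ⟨?_, ?_, ?_⟩
      · rw [Function.iterate_succ_apply']; exact hf_maps _ h1
      · have h := hf_mono _ hαu _ h1 h2
        rw [hfsm _ hαk] at h
        rw [Function.iterate_succ_apply']
        have he : α * μ ^ (k+1) = α * μ ^ k * μ := by ring
        rw [he]; exact h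
      · have h := hf_mono _ h1 _ hβu h3
        rw [hfsm _ hβk] at h
        rw [Function.iterate_succ_apply']
        have he : β * μ ^ (k+1) = β * μ ^ k * μ := by ring
        rw [he]; exact h
  -- norm bounds
  have hnb : ∀ k, α * μ ^ k * ‖u‖ ≤ κ * ‖f^[k] x‖ ∧ ‖f^[k] x‖ ≤ κ * (β * μ ^ k * ‖u‖) := by
    intro k
    obtain ⟨h1, h2, h3⟩ := key k
    constructor
    · have h := hnorm ((α * μ ^ k) • u) (f^[k] x)
        (hC_cone u (interior_subset hu) _ (mul_pos hαpos (pow_pos hμ k)).le) h2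
      rwa [norm_smul, Real.norm_eq_abs, abs_of_pos (mul_pos hαpos (pow_pos hμ k))] at h
    · have h := hnorm (f^[k] x) ((β * μ ^ k) • u) (interior_subset h1) h3
      rwa [norm_smul, Real.norm_eq_abs, abs_of_pos (mul_pos hβpos (pow_pos hμ k))] at h
  have hnpos : ∀ k, 0 < ‖f^[k] x‖ := by
    intro k
    have h := (hnb k).1
    nlinarith [mul_pos (mul_pos hαpos (pow_pos hμ k)) hupos]
  -- the scaled norm bounds
  have hc₁ : (0:ℝ) < α * ‖u‖ / κ := by positivity
  have hbnd : ∀ k, α * ‖u‖ / κ ≤ (μ⁻¹) ^ k * ‖f^[k] x‖ ∧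
      (μ⁻¹) ^ k * ‖f^[k] x‖ ≤ κ * (β * ‖u‖) := by
    intro k
    have h1 := (hnb k).1
    have h2 := (hnb k).2
    have hμk : (0:ℝ) < μ ^ k := pow_pos hμ k
    rw [inv_pow, inv_mul_eq_div]
    constructor
    · rw [le_div_iff₀ hμk, div_mul_eq_mul_div, div_le_iff₀ hκ]
      nlinarith
    · rw [div_le_iff₀ hμk]
      nlinarith
  -- iterate formula for r⁻¹ • f
  have hT : ∀ k, (fun z => μ⁻¹ • f z)^[k] x = (μ⁻¹) ^ k • f^[k] x := by
    intro k; induction k with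
    | zero => simp
    | succ k ih =>
      rw [Function.iterate_succ_apply', ih, Function.iterate_succ_apply' f k]
      show μ⁻¹ • f ((μ⁻¹) ^ k • f^[k] x) = (μ⁻¹) ^ (k+1) • f (f^[k] x)
      rw [hf_hom _ (key k).1 _ (pow_pos (inv_pos.mpr hμ) k), smul_smul, ← pow_succ']
  -- iterate formula for the normalized map
  have hg : ∀ k, (fun z => ‖f z‖⁻¹ • f z)^[k+1] x = ‖f^[k+1] x‖⁻¹ • f^[k+1] x := by
    intro k; induction k with
    | zero => simp
    | succ k ih =>
      rw [Function.iterate_succ_apply' _ (k+1), ih]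
      show ‖f (‖f^[k+1] x‖⁻¹ • f^[k+1] x)‖⁻¹ • f (‖f^[k+1] x‖⁻¹ • f^[k+1] x)
        = ‖f^[k+1+1] x‖⁻¹ • f^[k+1+1] x
      have hc : (0:ℝ) < ‖f^[k+1] x‖⁻¹ := inv_pos.mpr (hnpos (k+1))
      rw [hf_hom _ (key (k+1)).1 _ hc, Function.iterate_succ_apply' f (k+1)]
      rw [norm_smul, Real.norm_eq_abs, abs_of_pos hc, smul_smul]
      congr 1
      exact aux_mul_inv _ _ hc.ne'
  have hrw : (fun k : ℕ => (fun z => μ⁻¹ • f z)^[k] x)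
      = fun k : ℕ => (μ⁻¹) ^ k • f^[k] x := funext hT
  have hna : ∀ k, ‖(μ⁻¹) ^ k • f^[k] x‖ = (μ⁻¹) ^ k * ‖f^[k] x‖ := by
    intro k
    rw [norm_smul, Real.norm_eq_abs, abs_of_pos (pow_pos (inv_pos.mpr hμ) k)]
  constructor
  · intro hK
    rw [hrw] at hK
    have hKsub : closure (Set.range fun k : ℕ => (μ⁻¹) ^ k • f^[k] x)
        ⊆ {z : X | α * ‖u‖ / κ ≤ ‖z‖} := by
      apply closure_minimal _ (isClosed_le continuous_const continuous_norm)
      rintro _ ⟨k, rfl⟩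
      rw [Set.mem_setOf_eq, hna k]
      exact (hbnd k).1
    have hcont : ContinuousOn (fun z : X => ‖z‖⁻¹ • z)
        (closure (Set.range fun k : ℕ => (μ⁻¹) ^ k • f^[k] x)) := by
      apply ContinuousOn.smul _ continuousOn_id
      exact (continuous_norm.continuousOn).inv₀
        (fun z hz => ne_of_gt (lt_of_lt_of_le hc₁ (hKsub hz)))
    have himg := hK.image_of_continuousOn hcont
    refine IsCompact.of_isClosed_subset (himg.union (isCompact_singleton (x := x)))
      isClosed_closure ?_
    apply closure_minimal _ (himg.union (isCompact_singleton (x := x))).isClosed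
    rintro _ ⟨k, rfl⟩
    cases k with
    | zero => right; simp
    | succ k =>
      left
      refine ⟨(μ⁻¹) ^ (k+1) • f^[k+1] x, subset_closure ⟨k+1, rfl⟩, ?_⟩
      show ‖(μ⁻¹) ^ (k+1) • f^[k+1] x‖⁻¹ • ((μ⁻¹) ^ (k+1) • f^[k+1] x)
        = (fun z => ‖f z‖⁻¹ • f z)^[k+1] x
      rw [hg k, hna (k+1), smul_smul]
      congr 1
      exact aux_mul_inv _ _ (pow_pos (inv_pos.mpr hμ) (k+1)).ne'
  · intro hK
    rw [hrw]
    have hL : IsCompact ((fun p : ℝ × X => p.1 • p.2) ''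
        (Set.Icc (α * ‖u‖ / κ) (κ * (β * ‖u‖)) ×ˢ
          closure (Set.range fun k : ℕ => (fun z => ‖f z‖⁻¹ • f z)^[k] x))) :=
      ((isCompact_Icc).prod hK).image continuous_smul
    refine IsCompact.of_isClosed_subset (hL.union (isCompact_singleton (x := x)))
      isClosed_closure ?_
    apply closure_minimal _ (hL.union (isCompact_singleton (x := x))).isClosed
    rintro _ ⟨k, rfl⟩
    cases k with
    | zero => right; simp
    | succ k =>
      left
      refine ⟨((μ⁻¹) ^ (k+1) * ‖f^[k+1] x‖, (fun z => ‖f z‖⁻¹ • f z)^[k+1] x),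
        ⟨Set.mem_Icc.mpr ⟨(hbnd (k+1)).1, (hbnd (k+1)).2⟩, subset_closure ⟨k+1, rfl⟩⟩, ?_⟩
    
      show ((μ⁻¹) ^ (k+1) * ‖f^[k+1] x‖) • (fun z => ‖f z‖⁻¹ • f z)^[k+1] x
        = (μ⁻¹) ^ (k+1) • f^[k+1] x
      rw [hg k, smul_smul, mul_assoc, mul_inv_cancel₀ (hnpos (k+1)).ne', mul_one]
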